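/- Let Q be a self-adjoint operator on a Hilbert space H and let P be a symmetric operator defined on a dense subspace D that is invariant under (Q²+1)^{-1/2}, with P(Q²+1)^{-1/2} and (Q²+1)^{-1/2}P both defined on D. Then the operator P(Q²+1)^{-1/2} is bounded on D if and only if (Q²+1)^{-1/2}P is bounded on D, and in that case their operator norms agree. -/

import Mathlib

lemma aux_norm_le {H : Type*} [NormedAddCommGroup H] [InnerProductSpace ℂ H]
    {D : Submodule ℂ H} (hD : Dense (D : Set H)) (x : H) (M : ℝ) (hM : 0 ≤ M)
    (h : ∀ ψ : D, ‖(inner ℂ x (ψ : H) : ℂ)‖ ≤ M * ‖(ψ : H)‖) : ‖x‖ ≤ M := by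
  have hcl : IsClosed {y : H | ‖(inner ℂ x y : ℂ)‖ ≤ M * ‖y‖} := by
    apply isClosed_le
    · exact (continuous_const.inner continuous_id).norm
    · exact continuous_const.mul continuous_norm
  have key : ∀ y : H, ‖(inner ℂ x y : ℂ)‖ ≤ M * ‖y‖ := by
    intro y
    have hsub : (D : Set H) ⊆ {y : H | ‖(inner ℂ x y : ℂ)‖ ≤ M * ‖y‖} :=
      fun z hz => h ⟨z, hz⟩
    have := hcl.closure_subset_iff.mpr hsub
    rw [hD.closure_eq] at this
    exact this (Set.mem_univ y)
  have hx := key x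
  rw [inner_self_eq_norm_sq_to_K (𝕜 := ℂ)] at hx
  have hx2 : ‖x‖ ^ 2 ≤ M * ‖x‖ := by simpa using hx
  rcases eq_or_lt_of_le (norm_nonneg x) with h0 | h0
  · rw [← h0]; exact hM
  · nlinarith


/- STATEMENT 7: Let Q be a self-adjoint operator on a Hilbert space H and P a symmetric operator
on a dense subspace D invariant under K := (Q²+1)^{-1/2}.  Then P(Q²+1)^{-1/2} is bounded on D
iff (Q²+1)^{-1/2}P is bounded on D, and in that case their operator norms agree (expressed below
as: any bound for one is a bound for the other).

K is the bounded self-adjoint operator from the functional calculus of Q, characterized by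
K = K* and ‖Q(Kf)‖² + ‖Kf‖² = ‖f‖² for all f. -/
theorem stmt7
    {H : Type*} [NormedAddCommGroup H] [InnerProductSpace ℂ H] [CompleteSpace H]
    (Q : H →ₗ.[ℂ] H) (hQsa : Q.adjoint = Q)
    (K : H →L[ℂ] H) (hKsa : IsSelfAdjoint K)
    (hK : ∀ f : H, ∃ h : K f ∈ Q.domain, ‖Q ⟨K f, h⟩‖ ^ 2 + ‖K f‖ ^ 2 = ‖f‖ ^ 2)
    (D : Submodule ℂ H) (hD : Dense (D : Set H))
    (P : D →ₗ[ℂ] H)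
    (hPsym : ∀ φ ψ : D, (inner ℂ (P φ) (ψ : H) : ℂ) = inner ℂ (φ : H) (P ψ))
    (hinv : ∀ φ : D, K (φ : H) ∈ D) :
    ((∃ c : ℝ, 0 ≤ c ∧ ∀ φ : D, ‖P ⟨K (φ : H), hinv φ⟩‖ ≤ c * ‖(φ : H)‖) ↔
      (∃ c : ℝ, 0 ≤ c ∧ ∀ φ : D, ‖K (P φ)‖ ≤ c * ‖(φ : H)‖)) ∧
    ∀ c : ℝ, 0 ≤ c →
      ((∀ φ : D, ‖P ⟨K (φ : H), hinv φ⟩‖ ≤ c * ‖(φ : H)‖) ↔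
        (∀ φ : D, ‖K (P φ)‖ ≤ c * ‖(φ : H)‖)) := by
  have hKsym := hKsa.isSymmetric
  have main : ∀ c : ℝ, 0 ≤ c →
      ((∀ φ : D, ‖P ⟨K (φ : H), hinv φ⟩‖ ≤ c * ‖(φ : H)‖) ↔
        (∀ φ : D, ‖K (P φ)‖ ≤ c * ‖(φ : H)‖)) := by
    intro c hc
    constructor
    · intro h φ
      apply aux_norm_le hD _ _ (mul_nonneg hc (norm_nonneg _))
      intro ψ
      have e1 : (inner ℂ (K (P φ)) (ψ : H) : ℂ) = inner ℂ ((φ : H)) (P ⟨K (ψ : H), hinv ψ⟩) := by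
        calc (inner ℂ (K (P φ)) (ψ : H) : ℂ) = inner ℂ (P φ) (K (ψ : H)) := hKsym _ _
          _ = inner ℂ (P φ) ((⟨K (ψ : H), hinv ψ⟩ : D) : H) := rfl
          _ = inner ℂ ((φ : H)) (P ⟨K (ψ : H), hinv ψ⟩) := hPsym _ _
      rw [e1]
      calc ‖(inner ℂ ((φ : H)) (P ⟨K (ψ : H), hinv ψ⟩) : ℂ)‖
          ≤ ‖(φ : H)‖ * ‖P ⟨K (ψ : H), hinv ψ⟩‖ := norm_inner_le_norm _ _
        _ ≤ ‖(φ : H)‖ * (c * ‖(ψ : H)‖) := by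
            exact mul_le_mul_of_nonneg_left (h ψ) (norm_nonneg _)
        _ = c * ‖(φ : H)‖ * ‖(ψ : H)‖ := by ring
    · intro h φ
      apply aux_norm_le hD _ _ (mul_nonneg hc (norm_nonneg _))
      intro ψ
      have e1 : (inner ℂ (P ⟨K (φ : H), hinv φ⟩) (ψ : H) : ℂ) = inner ℂ ((φ : H)) (K (P ψ)) := by
        calc (inner ℂ (P ⟨K (φ : H), hinv φ⟩) (ψ : H) : ℂ)
            = inner ℂ (((⟨K (φ : H), hinv φ⟩ : D) : H)) (P ψ) := hPsym _ _
          _ = inner ℂ (K (φ : H)) (P ψ) := rfl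
          _ = inner ℂ ((φ : H)) (K (P ψ)) := (hKsym _ _).symm ▸ rfl
      rw [e1]
      calc ‖(inner ℂ ((φ : H)) (K (P ψ)) : ℂ)‖
          ≤ ‖(φ : H)‖ * ‖K (P ψ)‖ := norm_inner_le_norm _ _
        _ ≤ ‖(φ : H)‖ * (c * ‖(ψ : H)‖) :=
            mul_le_mul_of_nonneg_left (h ψ) (norm_nonneg _)
        _ = c * ‖(φ : H)‖ * ‖(ψ : H)‖ := by ring
  exact ⟨⟨fun ⟨c, hc, h⟩ => ⟨c, hc, (main c hc).mp h⟩,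
    fun ⟨c, hc, h⟩ => ⟨c, hc, (main c hc).mpr h⟩⟩, main⟩
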